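/- Under the grading of the associated graded ring where each xᵢ and each yᵢ has degree 1, the coefficient of w^i z^i in (1+wz)²(1+w^e z)/(1 − (d−2)wz − (e−1)w^e z − (d+e−2)w^{e+1}z²) (for e ≥ 2) equals: 1 if i=0, d if i=1, and (d−2)^{i−2}(d−1)² if i ≥ 2. -/

import Mathlib

open MvPowerSeries

namespace Stmt18Aux

abbrev R2 := MvPowerSeries (Fin 2) ℚ

/-- the exponent `(a, b)` as a finsupp -/
noncomputable def mon (a b : ℕ) : Fin 2 →₀ ℕ := Finsupp.single 0 a + Finsupp.single 1 b

@[simp] lemma mon_apply0 (a b : ℕ) : mon a b 0 = a := by simp [mon]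
@[simp] lemma mon_apply1 (a b : ℕ) : mon a b 1 = b := by
  simp [mon, Finsupp.single_apply]

lemma finsupp_ext {m n : Fin 2 →₀ ℕ} (h0 : m 0 = n 0) (h1 : m 1 = n 1) : m = n := by
  ext j; fin_cases j <;> assumption

lemma eq_mon (m : Fin 2 →₀ ℕ) : m = mon (m 0) (m 1) := finsupp_ext (by simp) (by simp)

lemma mon_eq_iff {a b c d : ℕ} : mon a b = mon c d ↔ a = c ∧ b = d := by
  constructor
  · intro h
    constructor
    · have := congrArg (fun f => (f : (Fin 2 →₀ ℕ)) 0) h; simpa using this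
    · have := congrArg (fun f => (f : (Fin 2 →₀ ℕ)) 1) h; simpa using this
  · rintro ⟨rfl, rfl⟩; rfl

lemma mon_le_iff {a b c d : ℕ} : mon a b ≤ mon c d ↔ a ≤ c ∧ b ≤ d := by
  rw [Finsupp.le_def]
  constructor
  · intro h; exact ⟨by simpa using h 0, by simpa using h 1⟩
  · rintro ⟨h1, h2⟩ j; fin_cases j <;> simpa

lemma mon_sub {a b c d : ℕ} : mon a b - mon c d = mon (a - c) (b - d) :=
  finsupp_ext (by simp [Finsupp.tsub_apply]) (by simp [Finsupp.tsub_apply])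

lemma mon_zero : mon 0 0 = 0 := finsupp_ext (by simp) (by simp)


/-- supported on exponents with `z`-degree ≤ `w`-degree -/
def G (f : R2) : Prop := ∀ m : Fin 2 →₀ ℕ, m 0 < m 1 → MvPowerSeries.coeff m f = 0

lemma G_one : G 1 := by
  intro m hm
  rw [coeff_one, if_neg]
  intro h
  rw [h] at hm; simp at hm

lemma G_monomial {a b : ℕ} (h : b ≤ a) (c : ℚ) : G (monomial (mon a b) c) := by
  intro m hm
  rw [coeff_monomial, if_neg]
  intro hme
  rw [hme] at hm; simp at hm; omega

lemma G_add {f g : R2} (hf : G f) (hg : G g) : G (f + g) := by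
  intro m hm; rw [map_add, hf m hm, hg m hm, add_zero]

lemma G_sub {f g : R2} (hf : G f) (hg : G g) : G (f - g) := by
  intro m hm; rw [map_sub, hf m hm, hg m hm, sub_zero]

lemma G_mul {f g : R2} (hf : G f) (hg : G g) : G (f * g) := by
  intro m hm
  rw [coeff_mul]
  apply Finset.sum_eq_zero
  intro x hx
  rw [Finset.HasAntidiagonal.mem_antidiagonal] at hx
  have hx0 : x.1 0 + x.2 0 = m 0 := by rw [← hx]; simp
  have hx1 : x.1 1 + x.2 1 = m 1 := by rw [← hx]; simp
  by_cases h1 : x.1 0 < x.1 1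
  · rw [hf _ h1, zero_mul]
  · rw [hg _ (by omega), mul_zero]

lemma G_pow {f : R2} (hf : G f) (n : ℕ) : G (f ^ n) := by
  induction n with
  | zero => simpa using G_one
  | succ n ih => rw [pow_succ]; exact G_mul ih hf

lemma G_inv {f : R2} (hf : G f) : G f⁻¹ := by
  suffices h : ∀ (k : ℕ) (m : Fin 2 →₀ ℕ), m 0 + m 1 ≤ k → m 0 < m 1 →
      MvPowerSeries.coeff m f⁻¹ = 0 by
    intro m hm; exact h (m 0 + m 1) m le_rfl hm
  intro k
  induction k with
  | zero => intro m h1 h2; omega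
  | succ k ih =>
    intro m hmk hm
    rw [MvPowerSeries.coeff_inv, if_neg (fun h => by rw [h] at hm; simp at hm)]
    rw [Finset.sum_eq_zero, mul_zero]
    intro x hx
    rw [Finset.HasAntidiagonal.mem_antidiagonal] at hx
    split_ifs with hx2
    · have hx0 : x.1 0 + x.2 0 = m 0 := by rw [← hx]; simp
      have hx1 : x.1 1 + x.2 1 = m 1 := by rw [← hx]; simp
      by_cases h1 : x.1 0 < x.1 1
      · rw [hf _ h1, zero_mul]
      · have hb : x.2 0 < x.2 1 := by omega
        have hx1ne : x.1 ≠ 0 := by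
          intro h
          rw [h, zero_add] at hx
          exact absurd hx (ne_of_lt hx2)
        have hpos : 0 < x.1 0 + x.1 1 := by
          rcases Nat.eq_zero_or_pos (x.1 0 + x.1 1) with h | h
          · exact absurd (finsupp_ext (m := x.1) (n := 0) (by simp; omega) (by simp; omega)) hx1ne
          · exact h
        rw [ih x.2 (by omega) hb, mul_zero]
    · rfl


lemma term_eq (a : ℚ) (p q : ℕ) :
    (C (σ := Fin 2) a) * X 0 ^ p * X 1 ^ q = monomial (mon p q) a := by
  rw [X_pow_eq, X_pow_eq, ← monomial_zero_eq_C_apply, monomial_mul_monomial,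
    monomial_mul_monomial, zero_add, mul_one, mul_one]
  rfl

/-- the denominator -/
noncomputable def Dd (d e : ℕ) : R2 :=
  1 - ((d : R2) - 2) * X (0 : Fin 2) * X 1 -
    ((e : R2) - 1) * X (0 : Fin 2) ^ e * X 1 -
    ((d : R2) + (e : R2) - 2) * X (0 : Fin 2) ^ (e + 1) * X 1 ^ 2

/-- the numerator -/
noncomputable def Nn (e : ℕ) : R2 :=
  (1 + X (0 : Fin 2) * X 1) ^ 2 * (1 + X (0 : Fin 2) ^ e * X 1)

lemma Dd_eq (d e : ℕ) :
    Dd d e = 1 - monomial (mon 1 1) ((d : ℚ) - 2) - monomial (mon e 1) ((e : ℚ) - 1)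
      - monomial (mon (e + 1) 2) ((d : ℚ) + e - 2) := by
  have h1 : ((d : R2) - 2) = C (σ := Fin 2) ((d : ℚ) - 2) := by
    rw [map_sub, map_natCast, map_ofNat]
  have h2 : ((e : R2) - 1) = C (σ := Fin 2) ((e : ℚ) - 1) := by
    rw [map_sub, map_natCast, map_one]
  have h3 : ((d : R2) + (e : R2) - 2) = C (σ := Fin 2) ((d : ℚ) + e - 2) := by
    rw [map_sub, map_add, map_natCast, map_natCast, map_ofNat]
  have t1 : C (σ := Fin 2) ((d : ℚ) - 2) * X 0 * X 1 = monomial (mon 1 1) ((d : ℚ) - 2) := by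
    rw [← term_eq, pow_one, pow_one]
  have t2 : C (σ := Fin 2) ((e : ℚ) - 1) * X 0 ^ e * X 1 = monomial (mon e 1) ((e : ℚ) - 1) := by
    rw [← term_eq, pow_one]
  have t3 : C (σ := Fin 2) ((d : ℚ) + e - 2) * X 0 ^ (e + 1) * X 1 ^ 2
      = monomial (mon (e + 1) 2) ((d : ℚ) + e - 2) := term_eq _ _ _
  rw [Dd, h1, h2, h3, t1, t2, t3]

lemma Nn_eq (e : ℕ) :
    Nn e = (1 + monomial (mon 1 1) 1) ^ 2 * (1 + monomial (mon e 1) 1) := by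
  have h1 : (X (0 : Fin 2) : R2) * X 1 = monomial (mon 1 1) 1 := by
    have := term_eq 1 1 1
    rwa [map_one, one_mul, pow_one, pow_one] at this
  have h2 : (X (0 : Fin 2) : R2) ^ e * X 1 = monomial (mon e 1) 1 := by
    have := term_eq 1 e 1
    rwa [map_one, one_mul, pow_one] at this
  rw [Nn, h1, h2]

lemma G_Dd (d e : ℕ) (he : 1 ≤ e) : G (Dd d e) := by
  rw [Dd_eq]
  exact G_sub (G_sub (G_sub G_one (G_monomial (by omega) _)) (G_monomial (by omega) _))
    (G_monomial (by omega) _)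

lemma G_Nn (e : ℕ) (he : 1 ≤ e) : G (Nn e) := by
  rw [Nn_eq]
  exact G_mul (G_pow (G_add G_one (G_monomial (by omega) _)) 2)
    (G_add G_one (G_monomial (by omega) _))

lemma constCoeff_Dd (d e : ℕ) : constantCoeff (Dd d e) = 1 := by
  have key : ∀ a b : ℕ, 0 < b → ¬((0 : Fin 2 →₀ ℕ) = mon a b) := by
    intro a b hb hh
    have := congrArg (fun f => (f : Fin 2 →₀ ℕ) 1) hh
    simp at this
    omega
  rw [← coeff_zero_eq_constantCoeff_apply, Dd_eq, map_sub, map_sub, map_sub, coeff_one,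
    if_pos rfl, coeff_monomial, coeff_monomial, coeff_monomial,
    if_neg (key _ _ one_pos), if_neg (key _ _ one_pos), if_neg (key _ _ two_pos)]
  ring

lemma mon_add {a b c d : ℕ} : mon a b + mon c d = mon (a + c) (b + d) :=
  finsupp_ext (by simp) (by simp)

lemma two_mul_monomial (m : Fin 2 →₀ ℕ) :
    (2 : R2) * monomial m 1 = monomial m 2 := by
  rw [show (2 : R2) = C (σ := Fin 2) 2 from (map_ofNat _ 2).symm,
    ← monomial_zero_eq_C_apply, monomial_mul_monomial, zero_add]
  norm_num

lemma P2_eq : ((1 : R2) + monomial (mon 1 1) 1) ^ 2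
    = 1 + monomial (mon 1 1) 2 + monomial (mon 2 2) 1 := by
  rw [add_sq, one_pow, sq, monomial_mul_monomial, mon_add, mul_one, mul_one, two_mul_monomial]

lemma coeff_P2 (a b : ℕ) :
    MvPowerSeries.coeff (mon a b)
      ((1 : R2) + monomial (mon 1 1) 2 + monomial (mon 2 2) 1) =
      if a = 0 ∧ b = 0 then 1 else if a = 1 ∧ b = 1 then 2
      else if a = 2 ∧ b = 2 then 1 else 0 := by
  have h0 : (mon a b = 0) ↔ (a = 0 ∧ b = 0) := by rw [← mon_zero, mon_eq_iff]
  rw [map_add, map_add, coeff_one, coeff_monomial, coeff_monomial]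
  simp only [h0, mon_eq_iff]
  split_ifs <;> (try rfl) <;> (try norm_num) <;> exfalso <;> omega

lemma coeff_Nn_diag (e : ℕ) (he : 2 ≤ e) (i : ℕ) :
    MvPowerSeries.coeff (mon i i) (Nn e) =
      if i = 0 then 1 else if i = 1 then 2 else if i = 2 then 1 else 0 := by
  rw [Nn_eq, P2_eq, mul_add, mul_one, map_add, coeff_mul_monomial, coeff_P2]
  have h2 : (if mon e 1 ≤ mon i i then
      MvPowerSeries.coeff (mon i i - mon e 1)
        ((1 : R2) + monomial (mon 1 1) 2 + monomial (mon 2 2) 1) * 1 else 0) = 0 := by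
    split_ifs with hle
    · rw [mon_le_iff] at hle
      rw [mon_sub, coeff_P2, mul_one]
      split_ifs <;> first | rfl | (exfalso; omega)
    · rfl
  rw [h2, add_zero]
  split_ifs <;> first | rfl | (exfalso; omega)

lemma FD_eq (d e : ℕ) (hd : 2 ≤ d) : Nn e * (Dd d e)⁻¹ * Dd d e = Nn e := by
  rw [mul_assoc, MvPowerSeries.inv_mul_cancel _ (by rw [constCoeff_Dd]; norm_num), mul_one]

lemma frec (d e : ℕ) (hd : 2 ≤ d) (he : 2 ≤ e) (j : ℕ) :
    MvPowerSeries.coeff (mon (j+1) (j+1)) (Nn e * (Dd d e)⁻¹) =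
      ((d : ℚ) - 2) * MvPowerSeries.coeff (mon j j) (Nn e * (Dd d e)⁻¹) +
      MvPowerSeries.coeff (mon (j+1) (j+1)) (Nn e) := by
  have hGF : G (Nn e * (Dd d e)⁻¹) :=
    G_mul (G_Nn e (by omega)) (G_inv (G_Dd d e (by omega)))
  have h := congrArg (MvPowerSeries.coeff (mon (j+1) (j+1))) (FD_eq d e hd)
  set A := (Dd d e)⁻¹ with hA
  rw [Dd_eq] at h
  rw [mul_sub, mul_sub, mul_sub, mul_one, map_sub, map_sub, map_sub,
    coeff_mul_monomial, coeff_mul_monomial, coeff_mul_monomial] at h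
  rw [if_pos (by rw [mon_le_iff]; omega), mon_sub] at h
  have e2 : (if mon e 1 ≤ mon (j+1) (j+1) then
      MvPowerSeries.coeff (mon (j+1) (j+1) - mon e 1) (Nn e * A) * ((e:ℚ) - 1)
      else 0) = 0 := by
    split_ifs with hle
    · rw [mon_le_iff] at hle
      rw [mon_sub, hGF _ (by simp; omega), zero_mul]
    · rfl
  have e3 : (if mon (e+1) 2 ≤ mon (j+1) (j+1) then
      MvPowerSeries.coeff (mon (j+1) (j+1) - mon (e+1) 2) (Nn e * A)
        * ((d:ℚ) + e - 2) else 0) = 0 := by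
    split_ifs with hle
    · rw [mon_le_iff] at hle
      rw [mon_sub, hGF _ (by simp; omega), zero_mul]
    · rfl
  rw [e2, e3, sub_zero, sub_zero] at h
  have hs : (j + 1 - 1 : ℕ) = j := by omega
  rw [hs] at h
  linarith [h]

lemma f0_eq (d e : ℕ) (hd : 2 ≤ d) (he : 2 ≤ e) :
    MvPowerSeries.coeff (mon 0 0) (Nn e * (Dd d e)⁻¹) = 1 := by
  have h := congrArg (MvPowerSeries.coeff (mon 0 0)) (FD_eq d e hd)
  set A := (Dd d e)⁻¹ with hA
  rw [Dd_eq] at h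
  rw [mul_sub, mul_sub, mul_sub, mul_one, map_sub, map_sub, map_sub,
    coeff_mul_monomial, coeff_mul_monomial, coeff_mul_monomial,
    if_neg (by rw [mon_le_iff]; omega), if_neg (by rw [mon_le_iff]; omega),
    if_neg (by rw [mon_le_iff]; omega), sub_zero, sub_zero, sub_zero] at h
  rw [h]
  have := coeff_Nn_diag e he 0
  simpa using this

lemma diag (d e : ℕ) (hd : 2 ≤ d) (he : 2 ≤ e) (i : ℕ) :
    MvPowerSeries.coeff (mon i i) (Nn e * (Dd d e)⁻¹) =
      if i = 0 then 1 else if i = 1 then (d : ℚ)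
      else ((d : ℚ) - 2) ^ (i - 2) * ((d : ℚ) - 1) ^ 2 := by
  have f0 := f0_eq d e hd he
  have f1 : MvPowerSeries.coeff (mon 1 1) (Nn e * (Dd d e)⁻¹) = (d : ℚ) := by
    rw [frec d e hd he 0, f0, coeff_Nn_diag e he 1]
    norm_num
  have f2 : MvPowerSeries.coeff (mon 2 2) (Nn e * (Dd d e)⁻¹) = ((d : ℚ) - 1) ^ 2 := by
    rw [frec d e hd he 1, f1, coeff_Nn_diag e he 2]
    norm_num
    ring
  obtain _ | _ | n := i
  · simpa using f0
  · simpa using f1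
  · have key : ∀ n : ℕ, MvPowerSeries.coeff (mon (n+2) (n+2)) (Nn e * (Dd d e)⁻¹)
        = ((d : ℚ) - 2) ^ n * ((d : ℚ) - 1) ^ 2 := by
      intro n
      induction n with
      | zero => simpa using f2
      | succ n ih =>
        rw [show n + 1 + 2 = (n + 2) + 1 from rfl, frec d e hd he (n+2), ih,
          coeff_Nn_diag e he (n+3)]
        rw [if_neg (by omega), if_neg (by omega), if_neg (by omega), add_zero, pow_succ]
        ring
    have hn : (n + 1 + 1 : ℕ) - 2 = n := by omega
    rw [key n, if_neg (by omega), if_neg (by omega), hn]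


end Stmt18Aux

/-- The coefficient of `w^i z^i` in
`(1+wz)²(1+w^e z)/(1 − (d−2)wz − (e−1)w^e z − (d+e−2)w^{e+1}z²)` equals
`1` if `i = 0`, `d` if `i = 1`, and `(d−2)^{i−2}(d−1)²` if `i ≥ 2`.
Here `w = X 0` and `z = X 1` in `ℚ[[w,z]]`. -/
theorem stmt18 (d e : ℕ) (hd : 2 ≤ d) (he : 2 ≤ e) (i : ℕ) :
    MvPowerSeries.coeff (Finsupp.single (0 : Fin 2) i + Finsupp.single (1 : Fin 2) i)
      ((1 + X (0 : Fin 2) * X 1) ^ 2 * (1 + X (0 : Fin 2) ^ e * X 1) *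
        (1 - ((d : MvPowerSeries (Fin 2) ℚ) - 2) * X (0 : Fin 2) * X 1 -
          ((e : MvPowerSeries (Fin 2) ℚ) - 1) * X (0 : Fin 2) ^ e * X 1 -
          ((d : MvPowerSeries (Fin 2) ℚ) + (e : MvPowerSeries (Fin 2) ℚ) - 2) *
            X (0 : Fin 2) ^ (e + 1) * X 1 ^ 2)⁻¹) =
      if i = 0 then 1
      else if i = 1 then (d : ℚ)
      else ((d : ℚ) - 2) ^ (i - 2) * ((d : ℚ) - 1) ^ 2 := by
  exact Stmt18Aux.diag d e hd he i
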